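/- For every δ > 0 there exists a constant C > 0 such that for all z > 0 and all ε ∈ (0,1]: ε'(ε)·ν([ε''(ε)z/ε, ∞)) + ε'(ε)·ν((−∞, −ε''(ε)z/ε]) ≤ C · max(z^{−(α−δ)}, z^{−(α+δ)}). -/

import Mathlib

open Filter Set MeasureTheory

private lemma aux_up (T : ℝ → ℝ) (M y₀ β : ℝ) (hM : 0 < M) (hy₀ : 0 < y₀) (hy₀M : y₀ ≤ M)
    (hmono : ∀ a b : ℝ, 0 < a → a ≤ b → T b ≤ T a)
    (hnn : ∀ y : ℝ, 0 < y → 0 ≤ T y)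
    (hzero : ∀ y : ℝ, M ≤ y → T y = 0)
    (hβ : 0 < β)
    (hstep : ∀ y : ℝ, 0 < y → y ≤ y₀ → T (2 * y) ≤ 2 ^ (-β) * T y) :
    ∀ u : ℝ, 0 < u → u ≤ y₀ → ∀ z : ℝ, 1 ≤ z →
      T (z * u) ≤ (2 * M / y₀) ^ β * z ^ (-β) * T u := by
  set K : ℝ := 2 * M / y₀ with hK
  have hKpos : 0 < K := by positivity
  have hK2 : (2:ℝ) ≤ K := by
    rw [hK, le_div_iff₀ hy₀]; nlinarith
  have base : ∀ u : ℝ, 0 < u → u ≤ y₀ → ∀ z : ℝ, 1 ≤ z → z ≤ K →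
      T (z * u) ≤ K ^ β * z ^ (-β) * T u := by
    intro u hu huy z hz1 hzK
    have h1 : T (z * u) ≤ T u := hmono u (z * u) hu (le_mul_of_one_le_left hu.le hz1)
    have h2 : (1:ℝ) ≤ K ^ β * z ^ (-β) := by
      have hz0 : 0 < z := lt_of_lt_of_le one_pos hz1
      have : K ^ (-β) ≤ z ^ (-β) :=
        Real.rpow_le_rpow_of_nonpos hz0 hzK (neg_nonpos.mpr hβ.le)
      calc (1:ℝ) = K ^ β * K ^ (-β) := by
            rw [← Real.rpow_add hKpos]; simp
        _ ≤ K ^ β * z ^ (-β) :=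
            mul_le_mul_of_nonneg_left this (Real.rpow_nonneg hKpos.le β)
    calc T (z * u) ≤ T u := h1
      _ ≤ K ^ β * z ^ (-β) * T u := le_mul_of_one_le_left (hnn u hu) h2
  have key : ∀ k : ℕ, ∀ u : ℝ, 0 < u → u ≤ y₀ → ∀ z : ℝ, 1 ≤ z → z ≤ 2 ^ (k + 1) →
      T (z * u) ≤ K ^ β * z ^ (-β) * T u := by
    intro k
    induction k with
    | zero =>
      intro u hu huy z hz1 hz2
      exact base u hu huy z hz1 (le_trans (by norm_num at hz2 ⊢; exact hz2) hK2)
    | succ k ih =>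
      intro u hu huy z hz1 hz2
      by_cases hz2' : z ≤ 2
      · exact base u hu huy z hz1 (le_trans hz2' hK2)
      push_neg at hz2'
      have hz0 : 0 < z := lt_of_lt_of_le one_pos hz1
      by_cases h2u : 2 * u ≤ y₀
      · have hd1 : (1:ℝ) ≤ z / 2 := by linarith
        have hd2 : z / 2 ≤ 2 ^ (k + 1) := by
          rw [div_le_iff₀ (by norm_num : (0:ℝ) < 2)]
          calc z ≤ 2 ^ (k + 1 + 1) := hz2
            _ = 2 ^ (k + 1) * 2 := by rw [pow_succ]
        have h := ih (2 * u) (by positivity) h2u (z / 2) hd1 hd2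
        rw [show z / 2 * (2 * u) = z * u by ring] at h
        have hs := hstep u hu huy
        calc T (z * u) ≤ K ^ β * (z / 2) ^ (-β) * T (2 * u) := h
          _ ≤ K ^ β * (z / 2) ^ (-β) * (2 ^ (-β) * T u) := by
              apply mul_le_mul_of_nonneg_left hs
              positivity
          _ = K ^ β * z ^ (-β) * T u := by
              rw [Real.div_rpow hz0.le (by norm_num : (0:ℝ) ≤ 2)]
              have h2ne : ((2:ℝ) ^ (-β)) ≠ 0 := by positivity
              field_simp
      · push_neg at h2u
        by_cases hMzu : M ≤ z * u
        · rw [hzero _ hMzu]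
          have := hnn u hu
          positivity
        · push_neg at hMzu
          apply base u hu huy z hz1
          rw [hK, le_div_iff₀ hy₀]
          nlinarith
  intro u hu huy z hz
  obtain ⟨k, hk⟩ := pow_unbounded_of_one_lt z (one_lt_two : (1:ℝ) < 2)
  exact key k u hu huy z hz (le_trans hk.le (pow_le_pow_right₀ one_le_two (Nat.le_succ k)))

private lemma aux_down (T : ℝ → ℝ) (y₁ γ : ℝ) (hy₁ : 0 < y₁)
    (hmono : ∀ a b : ℝ, 0 < a → a ≤ b → T b ≤ T a)
    (hnn : ∀ y : ℝ, 0 < y → 0 ≤ T y)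
    (hγ : 0 < γ)
    (hstep : ∀ y : ℝ, 0 < y → y ≤ y₁ → T (y / 2) ≤ 2 ^ γ * T y) :
    ∀ u : ℝ, 0 < u → u ≤ y₁ → ∀ z : ℝ, 0 < z → z ≤ 1 →
      T (z * u) ≤ 2 ^ γ * z ^ (-γ) * T u := by
  have base : ∀ u : ℝ, 0 < u → u ≤ y₁ → ∀ z : ℝ, 0 < z → z ≤ 1 → 1 ≤ 2 * z →
      T (z * u) ≤ 2 ^ γ * z ^ (-γ) * T u := by
    intro u hu huy z hz0 hz1 h2z
    have h1 : T (z * u) ≤ T (u / 2) := by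
      apply hmono (u / 2) (z * u) (by positivity)
      nlinarith
    have hzg : (1:ℝ) ≤ z ^ (-γ) :=
      Real.one_le_rpow_of_pos_of_le_one_of_nonpos hz0 hz1 (neg_nonpos.mpr hγ.le)
    calc T (z * u) ≤ T (u / 2) := h1
      _ ≤ 2 ^ γ * T u := hstep u hu huy
      _ ≤ 2 ^ γ * z ^ (-γ) * T u := by
          have hTu := hnn u hu
          have h2g : (0:ℝ) ≤ (2:ℝ) ^ γ := by positivity
          nlinarith [mul_le_mul_of_nonneg_right hzg (mul_nonneg h2g hTu)]
  have key : ∀ k : ℕ, ∀ u : ℝ, 0 < u → u ≤ y₁ → ∀ z : ℝ, 0 < z → z ≤ 1 →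
      1 ≤ z * 2 ^ (k + 1) → T (z * u) ≤ 2 ^ γ * z ^ (-γ) * T u := by
    intro k
    induction k with
    | zero =>
      intro u hu huy z hz0 hz1 hk
      apply base u hu huy z hz0 hz1
      norm_num at hk ⊢; linarith
    | succ k ih =>
      intro u hu huy z hz0 hz1 hk
      by_cases h2z : 1 ≤ 2 * z
      · exact base u hu huy z hz0 hz1 h2z
      push_neg at h2z
      have h2z0 : 0 < 2 * z := by positivity
      have h2z1 : 2 * z ≤ 1 := h2z.le
      have hk' : 1 ≤ 2 * z * 2 ^ (k + 1) := by
        calc (1:ℝ) ≤ z * 2 ^ (k + 1 + 1) := hk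
          _ = 2 * z * 2 ^ (k + 1) := by rw [pow_succ]; ring
      have h := ih (u / 2) (by positivity) (by linarith) (2 * z) h2z0 h2z1 hk'
      rw [show 2 * z * (u / 2) = z * u by ring] at h
      have hs := hstep u hu huy
      have hmr : ((2:ℝ) * z) ^ (-γ) = 2 ^ (-γ) * z ^ (-γ) :=
        Real.mul_rpow (by norm_num) hz0.le
      have h21 : (2:ℝ) ^ (-γ) * 2 ^ γ = 1 := by
        rw [← Real.rpow_add (by norm_num : (0:ℝ) < 2)]; simp
      calc T (z * u) ≤ 2 ^ γ * (2 * z) ^ (-γ) * T (u / 2) := h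
        _ ≤ 2 ^ γ * (2 * z) ^ (-γ) * (2 ^ γ * T u) := by
            apply mul_le_mul_of_nonneg_left hs
            positivity
        _ = (2 ^ (-γ) * 2 ^ γ) * (2 ^ γ * z ^ (-γ) * T u) := by rw [hmr]; ring
        _ = 2 ^ γ * z ^ (-γ) * T u := by rw [h21, one_mul]
  intro u hu huy z hz0 hz1
  obtain ⟨k, hk⟩ := pow_unbounded_of_one_lt (1 / z) (one_lt_two : (1:ℝ) < 2)
  have : 1 ≤ z * 2 ^ (k + 1) := by
    rw [div_lt_iff₀ hz0] at hk
    have : (2:ℝ) ^ k ≤ 2 ^ (k + 1) := pow_le_pow_right₀ one_le_two (Nat.le_succ k)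
    nlinarith [pow_pos (by norm_num : (0:ℝ) < 2) k]
  exact key k u hu huy z hz0 hz1 this

set_option maxHeartbeats 1600000 in
/-- Uniform polynomial bound for the rescaled tails of the Lévy measure. -/
theorem stmt_2 (α Cp Cm M : ℝ) (hα : α ∈ Set.Ioo (1:ℝ) 2)
    (hCp : 0 ≤ Cp) (hCm : 0 ≤ Cm) (hCpm : 0 < Cp + Cm) (hM : 0 < M)
    (ν : Measure ℝ)
    (hν0 : ν {0} = 0)
    (hνM : ν ((Set.Icc (-M) M)ᶜ) = 0)
    (hνMpt : ν {-M, M} = 0)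
    (hνfin : ∀ c > (0:ℝ), ν ((Set.Ioo (-c) c)ᶜ) ≠ ⊤)
    (lν : ℝ → ℝ)
    (hlν_cont : ContinuousOn lν (Set.Ioi 0)) (hlν_pos : ∀ x > (0:ℝ), 0 < lν x)
    (hlν_sv : ∀ lam > (0:ℝ), Tendsto (fun x => lν (lam * x) / lν x) atTop (nhds 1))
    (htail_p : Tendsto (fun z => z ^ α * (ν (Set.Ici z)).toReal / lν (1 / z))
      (nhdsWithin 0 (Set.Ioi 0)) (nhds Cp))
    (htail_m : Tendsto (fun z => z ^ α * (ν (Set.Iic (-z))).toReal / lν (1 / z))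
      (nhdsWithin 0 (Set.Ioi 0)) (nhds Cm))
    (e' e'' : ℝ → ℝ)
    (he'_cont : ContinuousOn e' (Set.Ioc 0 1)) (he''_cont : ContinuousOn e'' (Set.Ioc 0 1))
    (hpos : ∀ ε ∈ Set.Ioc (0:ℝ) 1, 0 < e' ε ∧ 0 < e'' ε)
    (he' : Tendsto e' (nhdsWithin 0 (Set.Ioi 0)) (nhds 0))
    (he'' : Tendsto e'' (nhdsWithin 0 (Set.Ioi 0)) (nhds 0))
    (he''e : Tendsto (fun ε => e'' ε / ε) (nhdsWithin 0 (Set.Ioi 0)) (nhds 0))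
    (hscale : Tendsto (fun ε => e' ε * (ε / e'' ε) ^ α * lν (ε / e'' ε))
      (nhdsWithin 0 (Set.Ioi 0)) (nhds 1)) :
    ∀ δ > (0:ℝ), ∃ C > (0:ℝ), ∀ z > (0:ℝ), ∀ ε ∈ Set.Ioc (0:ℝ) 1,
      e' ε * (ν (Set.Ici (e'' ε * z / ε))).toReal
          + e' ε * (ν (Set.Iic (-(e'' ε * z / ε)))).toReal
        ≤ C * max (z ^ (-(α - δ))) (z ^ (-(α + δ))) := by
  obtain ⟨hα1, hα2⟩ := hα
  intro δ hδ
  -- Reduce to small δ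
  set δ' := min δ ((α - 1) / 2) with hδ'_def
  have hδ'pos : 0 < δ' := lt_min hδ (by linarith)
  have hδ'lt : δ' < α - 1 := lt_of_le_of_lt (min_le_right _ _) (by linarith)
  have hδ'le : δ' ≤ δ := min_le_left _ _
  suffices h : ∃ C > (0:ℝ), ∀ z > (0:ℝ), ∀ ε ∈ Set.Ioc (0:ℝ) 1,
      e' ε * (ν (Set.Ici (e'' ε * z / ε))).toReal
          + e' ε * (ν (Set.Iic (-(e'' ε * z / ε)))).toReal
        ≤ C * max (z ^ (-(α - δ'))) (z ^ (-(α + δ'))) by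
    obtain ⟨C, hC, hmain⟩ := h
    refine ⟨C, hC, fun z hz ε hε => le_trans (hmain z hz ε hε) ?_⟩
    apply mul_le_mul_of_nonneg_left _ hC.le
    rcases le_or_gt 1 z with hz1 | hz1
    · apply max_le
      · exact le_trans (Real.rpow_le_rpow_of_exponent_le hz1 (by linarith)) (le_max_left _ _)
      · exact le_trans (Real.rpow_le_rpow_of_exponent_le hz1 (by linarith)) (le_max_left _ _)
    · apply max_le
      · exact le_trans (Real.rpow_le_rpow_of_exponent_ge hz hz1.le (by linarith)) (le_max_right _ _)
      · exact le_trans (Real.rpow_le_rpow_of_exponent_ge hz hz1.le (by linarith)) (le_max_right _ _)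
  set β := α - δ' with hβ_def
  set γ := α + δ' with hγ_def
  have hβpos : 0 < β := by rw [hβ_def]; linarith
  have hβα : β < α := by rw [hβ_def]; linarith
  have hγpos : 0 < γ := by rw [hγ_def]; linarith
  have hαγ : α < γ := by rw [hγ_def]; linarith
  set A := Cp + Cm with hA_def
  set T : ℝ → ℝ := fun y => (ν (Set.Ici y)).toReal + (ν (Set.Iic (-y))).toReal with hT
  -- basic facts about T
  have hfinIci : ∀ y : ℝ, 0 < y → ν (Set.Ici y) ≠ ⊤ := by
    intro y hy
    refine ne_top_of_le_ne_top (hνfin y hy) (measure_mono ?_)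
    intro x hx
    simp only [mem_compl_iff, mem_Ioo, not_and, not_lt]
    intro _; exact hx
  have hfinIic : ∀ y : ℝ, 0 < y → ν (Set.Iic (-y)) ≠ ⊤ := by
    intro y hy
    refine ne_top_of_le_ne_top (hνfin y hy) (measure_mono ?_)
    intro x hx
    simp only [mem_Iic] at hx
    simp only [mem_compl_iff, mem_Ioo, not_and, not_lt]
    intro h1; linarith
  have hmono : ∀ a b : ℝ, 0 < a → a ≤ b → T b ≤ T a := by
    intro a b ha hab
    apply add_le_add
    · exact ENNReal.toReal_mono (hfinIci a ha) (measure_mono (Set.Ici_subset_Ici.mpr hab))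
    · exact ENNReal.toReal_mono (hfinIic a ha) (measure_mono (Set.Iic_subset_Iic.mpr (neg_le_neg hab)))
  have hnn : ∀ y : ℝ, 0 < y → 0 ≤ T y := by
    intro y _
    exact add_nonneg ENNReal.toReal_nonneg ENNReal.toReal_nonneg
  have hzero : ∀ y : ℝ, M ≤ y → T y = 0 := by
    intro y hy
    have h1 : ν (Set.Ici y) = 0 := by
      refine le_antisymm (le_trans (measure_mono (?_ : Set.Ici y ⊆ {M} ∪ (Set.Icc (-M) M)ᶜ)) ?_) zero_le
      · intro x hx
        by_cases hxM : x = M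
        · exact Or.inl hxM
        · right
          simp only [mem_compl_iff, mem_Icc, not_and, not_le]
          intro _
          have : M ≤ x := le_trans hy hx
          exact lt_of_le_of_ne this (Ne.symm hxM)
      · calc ν ({M} ∪ (Set.Icc (-M) M)ᶜ) ≤ ν {M} + ν ((Set.Icc (-M) M)ᶜ) := measure_union_le _ _
          _ ≤ ν {-M, M} + 0 := by
              rw [hνM]
              exact add_le_add (measure_mono (by simp)) le_rfl
          _ = 0 := by rw [hνMpt]; simp
    have h2 : ν (Set.Iic (-y)) = 0 := by
      refine le_antisymm (le_trans (measure_mono (?_ : Set.Iic (-y) ⊆ {-M} ∪ (Set.Icc (-M) M)ᶜ)) ?_) zero_le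
      · intro x hx
        by_cases hxM : x = -M
        · exact Or.inl hxM
        · right
          simp only [mem_compl_iff, mem_Icc, not_and, not_le]
          intro hge
          exfalso
          have hle : x ≤ -M := le_trans hx (by linarith)
          exact hxM (le_antisymm hle hge)
      · calc ν ({-M} ∪ (Set.Icc (-M) M)ᶜ) ≤ ν {-M} + ν ((Set.Icc (-M) M)ᶜ) := measure_union_le _ _
          _ ≤ ν {-M, M} + 0 := by
              rw [hνM]
              exact add_le_add (measure_mono (by simp)) le_rfl
          _ = 0 := by rw [hνMpt]; simp
    simp only [hT, h1, h2, ENNReal.toReal_zero, add_zero]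
  have hApos : 0 < A := hCpm
  have hAne : A ≠ 0 := ne_of_gt hApos
  -- combined tail limit
  have hg : Tendsto (fun y => y ^ α * T y / lν (1 / y)) (nhdsWithin 0 (Set.Ioi 0)) (nhds A) := by
    have := htail_p.add htail_m
    apply this.congr
    intro y
    simp only [hT]
    ring
  -- positivity of T eventually
  have hTpos_ev : ∀ᶠ y in nhdsWithin 0 (Set.Ioi 0), 0 < T y := by
    filter_upwards [hg.eventually_const_lt hApos, self_mem_nhdsWithin] with y h1 h2
    have hy : (0:ℝ) < y := h2
    have hl : 0 < lν (1 / y) := hlν_pos _ (by positivity)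
    rcases div_pos_iff.mp h1 with ⟨hnum, _⟩ | ⟨_, hneg⟩
    · rcases mul_pos_iff.mp hnum with ⟨_, hTy⟩ | ⟨hcontra, _⟩
      · exact hTy
      · exact absurd (Real.rpow_pos_of_pos hy α) (not_lt.mpr hcontra.le)
    · exact absurd hl (not_lt.mpr hneg.le)
  have hinv : Tendsto (fun y : ℝ => 1 / y) (nhdsWithin 0 (Set.Ioi 0)) atTop := by
    simpa [one_div] using (tendsto_inv_nhdsGT_zero : Tendsto (fun x : ℝ => x⁻¹) (nhdsWithin 0 (Set.Ioi 0)) atTop)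
  -- the ratio limits
  have hup_ratio : Tendsto (fun y => T (2 * y) / T y) (nhdsWithin 0 (Set.Ioi 0))
      (nhds ((2:ℝ) ^ (-α))) := by
    have hmul2 : Tendsto (fun y : ℝ => 2 * y) (nhdsWithin 0 (Set.Ioi 0)) (nhdsWithin 0 (Set.Ioi 0)) := by
      apply tendsto_nhdsWithin_of_tendsto_nhds_of_eventually_within
      · have h0 : Tendsto (fun y : ℝ => 2 * y) (nhds 0) (nhds 0) := by
          exact (continuous_const.mul continuous_id).tendsto' 0 0 (by norm_num)
        exact h0.mono_left nhdsWithin_le_nhds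
      · filter_upwards [self_mem_nhdsWithin] with y hy
        exact mul_pos two_pos (mem_Ioi.mp hy)
    have hg2 : Tendsto (fun y => (2 * y) ^ α * T (2 * y) / lν (1 / (2 * y)))
        (nhdsWithin 0 (Set.Ioi 0)) (nhds A) := hg.comp hmul2
    have hlr : Tendsto (fun y : ℝ => lν (1 / 2 * (1 / y)) / lν (1 / y))
        (nhdsWithin 0 (Set.Ioi 0)) (nhds 1) := (hlν_sv (1 / 2) (by norm_num)).comp hinv
    have hF : Tendsto (fun y => ((2 * y) ^ α * T (2 * y) / lν (1 / (2 * y))) / (y ^ α * T y / lν (1 / y))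
          * (lν (1 / 2 * (1 / y)) / lν (1 / y)) * (2:ℝ) ^ (-α))
        (nhdsWithin 0 (Set.Ioi 0)) (nhds ((2:ℝ) ^ (-α))) := by
      have := ((hg2.div hg hAne).mul hlr).mul_const ((2:ℝ) ^ (-α))
      simpa [div_self hAne] using this
    apply hF.congr'
    filter_upwards [hTpos_ev, self_mem_nhdsWithin] with y hTy hy0
    have hy : (0:ℝ) < y := hy0
    have h2y : (0:ℝ) < 2 * y := by positivity
    have hl1 : 0 < lν (1 / y) := hlν_pos _ (by positivity)
    have hl2 : 0 < lν (1 / (2 * y)) := hlν_pos _ (by positivity)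
    have h12 : (1:ℝ) / 2 * (1 / y) = 1 / (2 * y) := by
      rw [div_mul_div_comm, one_mul]
    have hpow : (2 * y) ^ α = 2 ^ α * y ^ α := Real.mul_rpow (by norm_num) hy.le
    have hneg : (2:ℝ) ^ (-α) = ((2:ℝ) ^ α)⁻¹ := by
      rw [Real.rpow_neg (by norm_num)]
    have h2α : ((2:ℝ) ^ α) ≠ 0 := by positivity
    have hyα : (y:ℝ) ^ α ≠ 0 := by positivity
    have alg_up : ∀ a b c d u v : ℝ, b ≠ 0 → c ≠ 0 → d ≠ 0 → u ≠ 0 → v ≠ 0 →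
        v * u * a / c / (u * b / d) * (c / d) * v⁻¹ = a / b := by
      intro a b c d u v hb hc hd hu hv
      field_simp
    rw [h12, hpow, hneg]
    exact alg_up (T (2 * y)) (T y) (lν (1 / (2 * y))) (lν (1 / y)) (y ^ α) (2 ^ α)
      (ne_of_gt hTy) (ne_of_gt hl2) (ne_of_gt hl1) hyα h2α
  have hdown_ratio : Tendsto (fun y => T (y / 2) / T y) (nhdsWithin 0 (Set.Ioi 0))
      (nhds ((2:ℝ) ^ α)) := by
    have hdiv2 : Tendsto (fun y : ℝ => y / 2) (nhdsWithin 0 (Set.Ioi 0)) (nhdsWithin 0 (Set.Ioi 0)) := by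
      apply tendsto_nhdsWithin_of_tendsto_nhds_of_eventually_within
      · have h0 : Tendsto (fun y : ℝ => y / 2) (nhds 0) (nhds 0) := by
          exact (continuous_id.div_const 2).tendsto' 0 0 (by norm_num)
        exact h0.mono_left nhdsWithin_le_nhds
      · filter_upwards [self_mem_nhdsWithin] with y hy
        exact div_pos (mem_Ioi.mp hy) two_pos
    have hg2 : Tendsto (fun y => (y / 2) ^ α * T (y / 2) / lν (1 / (y / 2)))
        (nhdsWithin 0 (Set.Ioi 0)) (nhds A) := hg.comp hdiv2
    have hlr : Tendsto (fun y : ℝ => lν (2 * (1 / y)) / lν (1 / y))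
        (nhdsWithin 0 (Set.Ioi 0)) (nhds 1) := (hlν_sv 2 (by norm_num)).comp hinv
    have hF : Tendsto (fun y => ((y / 2) ^ α * T (y / 2) / lν (1 / (y / 2))) / (y ^ α * T y / lν (1 / y))
          * (lν (2 * (1 / y)) / lν (1 / y)) * (2:ℝ) ^ α)
        (nhdsWithin 0 (Set.Ioi 0)) (nhds ((2:ℝ) ^ α)) := by
      have := ((hg2.div hg hAne).mul hlr).mul_const ((2:ℝ) ^ α)
      simpa [div_self hAne] using this
    apply hF.congr'
    filter_upwards [hTpos_ev, self_mem_nhdsWithin] with y hTy hy0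
    have hy : (0:ℝ) < y := hy0
    have h2y : (0:ℝ) < y / 2 := by positivity
    have hl1 : 0 < lν (1 / y) := hlν_pos _ (by positivity)
    have hl2 : 0 < lν (1 / (y / 2)) := hlν_pos _ (by positivity)
    have h12 : (2:ℝ) * (1 / y) = 1 / (y / 2) := by
      rw [one_div_div]
      ring
    have hpow : (y / 2) ^ α = y ^ α / 2 ^ α := Real.div_rpow hy.le (by norm_num : (0:ℝ) ≤ 2) α
    have h2α : ((2:ℝ) ^ α) ≠ 0 := by positivity
    have hyα : (y:ℝ) ^ α ≠ 0 := by positivity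
    have alg_down : ∀ a b c d u v : ℝ, b ≠ 0 → c ≠ 0 → d ≠ 0 → u ≠ 0 → v ≠ 0 →
        u / v * a / c / (u * b / d) * (c / d) * v = a / b := by
      intro a b c d u v hb hc hd hu hv
      field_simp
    rw [h12, hpow]
    exact alg_down (T (y / 2)) (T y) (lν (1 / (y / 2))) (lν (1 / y)) (y ^ α) (2 ^ α)
      (ne_of_gt hTy) (ne_of_gt hl2) (ne_of_gt hl1) hyα h2α
  -- step inequalities eventually
  have hstep_up_ev : ∀ᶠ y in nhdsWithin 0 (Set.Ioi 0), T (2 * y) ≤ 2 ^ (-β) * T y := by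
    have hlt : (2:ℝ) ^ (-α) < 2 ^ (-β) := (Real.rpow_lt_rpow_left_iff one_lt_two).mpr (by linarith)
    filter_upwards [hup_ratio.eventually_lt_const hlt, hTpos_ev] with y h1 h2
    have := mul_le_mul_of_nonneg_right h1.le h2.le
    rwa [div_mul_cancel₀ _ (ne_of_gt h2)] at this
  have hstep_down_ev : ∀ᶠ y in nhdsWithin 0 (Set.Ioi 0), T (y / 2) ≤ 2 ^ γ * T y := by
    have hlt : (2:ℝ) ^ α < 2 ^ γ := (Real.rpow_lt_rpow_left_iff one_lt_two).mpr (by linarith)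
    filter_upwards [hdown_ratio.eventually_lt_const hlt, hTpos_ev] with y h1 h2
    have := mul_le_mul_of_nonneg_right h1.le h2.le
    rwa [div_mul_cancel₀ _ (ne_of_gt h2)] at this
  -- extract y₂
  have hS := (hstep_up_ev.and hstep_down_ev).and hTpos_ev
  rw [Filter.eventually_iff, mem_nhdsGT_iff_exists_Ioc_subset] at hS
  obtain ⟨yu, hyu, hsubS⟩ := hS
  have hyu0 : (0:ℝ) < yu := hyu
  set y₂ := min yu M with hy₂_def
  have hy₂pos : 0 < y₂ := lt_min hyu0 hM
  have hy₂M : y₂ ≤ M := min_le_right _ _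
  have hP : ∀ y : ℝ, 0 < y → y ≤ y₂ →
      (T (2 * y) ≤ 2 ^ (-β) * T y ∧ T (y / 2) ≤ 2 ^ γ * T y) ∧ 0 < T y :=
    fun y h1 h2 => hsubS ⟨h1, le_trans h2 (min_le_left _ _)⟩
  have hup := aux_up T M y₂ β hM hy₂pos hy₂M hmono hnn hzero hβpos
    (fun y h1 h2 => ((hP y h1 h2).1).1)
  have hdown := aux_down T y₂ γ hy₂pos hmono hnn hγpos
    (fun y h1 h2 => ((hP y h1 h2).1).2)
  -- global polynomial bound
  have hTy₂nn : 0 ≤ T y₂ := hnn _ hy₂pos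
  set C₃ := 2 ^ γ * y₂ ^ γ * T y₂ + T y₂ * M ^ γ with hC₃_def
  have hC₃nn : 0 ≤ C₃ := by
    have h1 : (0:ℝ) ≤ 2 ^ γ * y₂ ^ γ := by positivity
    have h2 : (0:ℝ) ≤ M ^ γ := by positivity
    exact add_nonneg (mul_nonneg h1 hTy₂nn) (mul_nonneg hTy₂nn h2)
  have hglob : ∀ w : ℝ, 0 < w → T w ≤ C₃ * w ^ (-γ) := by
    intro w hw
    rcases le_or_gt w y₂ with hcase | hcase
    · have hz1 : w / y₂ ≤ 1 := (div_le_one hy₂pos).mpr hcase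
      have h := hdown y₂ hy₂pos le_rfl (w / y₂) (by positivity) hz1
      rw [div_mul_cancel₀ _ (ne_of_gt hy₂pos)] at h
      have hr : (w / y₂) ^ (-γ) = w ^ (-γ) * y₂ ^ γ := by
        rw [Real.div_rpow hw.le hy₂pos.le, Real.rpow_neg hy₂pos.le, div_inv_eq_mul]
      rw [hr] at h
      calc T w ≤ 2 ^ γ * (w ^ (-γ) * y₂ ^ γ) * T y₂ := h
        _ = 2 ^ γ * y₂ ^ γ * T y₂ * w ^ (-γ) := by ring
        _ ≤ C₃ * w ^ (-γ) := by
            apply mul_le_mul_of_nonneg_right _ (Real.rpow_nonneg hw.le _)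
            have h2 : (0:ℝ) ≤ M ^ γ := by positivity
            exact le_add_of_nonneg_right (mul_nonneg hTy₂nn h2)
    · rcases lt_or_ge w M with hwM | hwM
      · have h1 : T w ≤ T y₂ := hmono y₂ w hy₂pos hcase.le
        have h2 : (1:ℝ) ≤ M ^ γ * w ^ (-γ) := by
          have hle : M ^ (-γ) ≤ w ^ (-γ) :=
            Real.rpow_le_rpow_of_nonpos hw hwM.le (neg_nonpos.mpr hγpos.le)
          calc (1:ℝ) = M ^ γ * M ^ (-γ) := by rw [← Real.rpow_add hM]; simp
            _ ≤ M ^ γ * w ^ (-γ) := mul_le_mul_of_nonneg_left hle (Real.rpow_nonneg hM.le _)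
        calc T w ≤ T y₂ := h1
          _ ≤ T y₂ * (M ^ γ * w ^ (-γ)) := le_mul_of_one_le_right hTy₂nn h2
          _ = T y₂ * M ^ γ * w ^ (-γ) := by ring
          _ ≤ C₃ * w ^ (-γ) := by
              apply mul_le_mul_of_nonneg_right _ (Real.rpow_nonneg hw.le _)
              have h3 : (0:ℝ) ≤ 2 ^ γ * y₂ ^ γ := by positivity
              exact le_add_of_nonneg_left (mul_nonneg h3 hTy₂nn)
      · rw [hzero w hwM]
        exact mul_nonneg hC₃nn (Real.rpow_nonneg hw.le _)
  -- the rescaled tail limit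
  have hIoo : Set.Ioo (0:ℝ) 1 ∈ nhdsWithin 0 (Set.Ioi (0:ℝ)) := by
    rw [← Set.Ioi_inter_Iio]
    exact inter_mem self_mem_nhdsWithin (nhdsWithin_le_nhds (Iio_mem_nhds one_pos))
  have hu_pos_ev : ∀ᶠ ε in nhdsWithin 0 (Set.Ioi (0:ℝ)), e'' ε / ε ∈ Set.Ioi (0:ℝ) := by
    filter_upwards [hIoo] with ε hε
    exact div_pos (hpos ε ⟨hε.1, hε.2.le⟩).2 hε.1
  have hu_tend : Tendsto (fun ε => e'' ε / ε) (nhdsWithin 0 (Set.Ioi 0)) (nhdsWithin 0 (Set.Ioi 0)) :=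
    tendsto_nhdsWithin_iff.mpr ⟨he''e, hu_pos_ev⟩
  have hgcomp : Tendsto (fun ε => (e'' ε / ε) ^ α * T (e'' ε / ε) / lν (1 / (e'' ε / ε)))
      (nhdsWithin 0 (Set.Ioi 0)) (nhds A) := hg.comp hu_tend
  have he'T : Tendsto (fun ε => e' ε * T (e'' ε / ε)) (nhdsWithin 0 (Set.Ioi 0)) (nhds A) := by
    have hprod := hscale.mul hgcomp
    rw [one_mul] at hprod
    apply hprod.congr'
    filter_upwards [hIoo] with ε hε
    have hε0 : (0:ℝ) < ε := hε.1
    have he''p : 0 < e'' ε := (hpos ε ⟨hε.1, hε.2.le⟩).2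
    have hup0 : 0 < e'' ε / ε := div_pos he''p hε0
    have hl : 0 < lν (ε / e'' ε) := hlν_pos _ (by positivity)
    have h1d : 1 / (e'' ε / ε) = ε / e'' ε := one_div_div _ _
    have hXY : (ε / e'' ε) ^ α * (e'' ε / ε) ^ α = 1 := by
      rw [← Real.mul_rpow (by positivity) (by positivity),
        show ε / e'' ε * (e'' ε / ε) = 1 by field_simp]
      exact Real.one_rpow α
    rw [h1d]
    calc e' ε * (ε / e'' ε) ^ α * lν (ε / e'' ε) * ((e'' ε / ε) ^ α * T (e'' ε / ε) / lν (ε / e'' ε))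
        = e' ε * T (e'' ε / ε) * ((ε / e'' ε) ^ α * (e'' ε / ε) ^ α) * (lν (ε / e'' ε) / lν (ε / e'' ε)) := by
          ring
      _ = e' ε * T (e'' ε / ε) := by rw [hXY, div_self (ne_of_gt hl)]; ring
  -- extract ε₀
  have hev := (he'T.eventually_le_const (lt_add_one A)).and
    ((he''e.eventually_le_const hy₂pos).and hu_pos_ev)
  rw [Filter.eventually_iff, mem_nhdsGT_iff_exists_Ioc_subset] at hev
  obtain ⟨e₁, he₁, hsubε⟩ := hev
  have he₁0 : (0:ℝ) < e₁ := he₁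
  set ε₀ := min e₁ 1 with hε₀_def
  have hε₀pos : 0 < ε₀ := lt_min he₁0 one_pos
  have hε₀le1 : ε₀ ≤ 1 := min_le_right _ _
  have hPε : ∀ ε : ℝ, 0 < ε → ε ≤ ε₀ →
      e' ε * T (e'' ε / ε) ≤ A + 1 ∧ e'' ε / ε ≤ y₂ ∧ 0 < e'' ε / ε := by
    intro ε h1 h2
    have := hsubε ⟨h1, le_trans h2 (min_le_left _ _)⟩
    exact ⟨this.1, this.2.1, this.2.2⟩
  -- compact part
  have hsub1 : Set.Icc ε₀ 1 ⊆ Set.Ioc (0:ℝ) 1 := fun x hx => ⟨lt_of_lt_of_le hε₀pos hx.1, hx.2⟩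
  have hne : (Set.Icc ε₀ 1).Nonempty := ⟨1, hε₀le1, le_rfl⟩
  obtain ⟨xM, hxM, hxMmax⟩ := isCompact_Icc.exists_isMaxOn hne (he'_cont.mono hsub1)
  have hEpos : 0 < e' xM := (hpos xM (hsub1 hxM)).1
  have hucont : ContinuousOn (fun ε => e'' ε / ε) (Set.Icc ε₀ 1) :=
    (he''_cont.mono hsub1).div continuousOn_id
      (fun x hx => ne_of_gt (lt_of_lt_of_le hε₀pos hx.1))
  obtain ⟨xm, hxm, hxmmin⟩ := isCompact_Icc.exists_isMinOn hne hucont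
  have humpos : 0 < e'' xm / xm :=
    div_pos (hpos xm (hsub1 hxm)).2 (lt_of_lt_of_le hε₀pos hxm.1)
  -- the constant
  set K₁ := (2 * M / y₂) ^ β with hK₁_def
  have hK₁pos : 0 < K₁ := Real.rpow_pos_of_pos (by positivity) _
  set C := max ((A + 1) * max K₁ (2 ^ γ)) (e' xM * C₃ * (e'' xm / xm) ^ (-γ)) with hC_def
  have hCpos : 0 < C := by
    apply lt_of_lt_of_le _ (le_max_left _ _)
    have h1 : 0 < max K₁ ((2:ℝ) ^ γ) := lt_of_lt_of_le hK₁pos (le_max_left _ _)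
    exact mul_pos (by linarith) h1
  refine ⟨C, hCpos, ?_⟩
  intro z hz ε hε
  have hu0 : 0 < e'' ε / ε := div_pos (hpos ε hε).2 hε.1
  have he'nn : 0 ≤ e' ε := (hpos ε hε).1.le
  have hLHS : e' ε * (ν (Set.Ici (e'' ε * z / ε))).toReal
      + e' ε * (ν (Set.Iic (-(e'' ε * z / ε)))).toReal = e' ε * T (z * (e'' ε / ε)) := by
    rw [show e'' ε * z / ε = z * (e'' ε / ε) by ring]
    simp only [hT]
    ring
  rw [hLHS]
  rcases le_or_gt ε ε₀ with hcase | hcase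
  · obtain ⟨hb1, hb2, hb3⟩ := hPε ε hε.1 hcase
    rcases le_or_gt 1 z with hz1 | hz1
    · have h := hup (e'' ε / ε) hb3 hb2 z hz1
      have hK₁C : K₁ * (A + 1) ≤ C := by
        refine le_trans ?_ (le_max_left _ _)
        rw [mul_comm]
        exact mul_le_mul_of_nonneg_left (le_max_left K₁ ((2:ℝ) ^ γ)) (by linarith)
      calc e' ε * T (z * (e'' ε / ε))
          ≤ e' ε * (K₁ * z ^ (-β) * T (e'' ε / ε)) := mul_le_mul_of_nonneg_left h he'nn
        _ = K₁ * z ^ (-β) * (e' ε * T (e'' ε / ε)) := by ring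
        _ ≤ K₁ * z ^ (-β) * (A + 1) := by
            apply mul_le_mul_of_nonneg_left hb1
            have h2 := Real.rpow_nonneg hz.le (-β)
            positivity
        _ = K₁ * (A + 1) * z ^ (-β) := by ring
        _ ≤ C * z ^ (-β) := mul_le_mul_of_nonneg_right hK₁C (Real.rpow_nonneg hz.le _)
        _ ≤ C * max (z ^ (-β)) (z ^ (-γ)) :=
            mul_le_mul_of_nonneg_left (le_max_left _ _) hCpos.le
    · have h := hdown (e'' ε / ε) hb3 hb2 z hz hz1.le
      have hK₂C : (2:ℝ) ^ γ * (A + 1) ≤ C := by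
        refine le_trans ?_ (le_max_left _ _)
        rw [mul_comm]
        exact mul_le_mul_of_nonneg_left (le_max_right K₁ ((2:ℝ) ^ γ)) (by linarith)
      calc e' ε * T (z * (e'' ε / ε))
          ≤ e' ε * (2 ^ γ * z ^ (-γ) * T (e'' ε / ε)) := mul_le_mul_of_nonneg_left h he'nn
        _ = 2 ^ γ * z ^ (-γ) * (e' ε * T (e'' ε / ε)) := by ring
        _ ≤ 2 ^ γ * z ^ (-γ) * (A + 1) := by
            apply mul_le_mul_of_nonneg_left hb1
            have h2 := Real.rpow_nonneg hz.le (-γ)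
            positivity
        _ = 2 ^ γ * (A + 1) * z ^ (-γ) := by ring
        _ ≤ C * z ^ (-γ) := mul_le_mul_of_nonneg_right hK₂C (Real.rpow_nonneg hz.le _)
        _ ≤ C * max (z ^ (-β)) (z ^ (-γ)) :=
            mul_le_mul_of_nonneg_left (le_max_right _ _) hCpos.le
  · have hεIcc : ε ∈ Set.Icc ε₀ 1 := ⟨hcase.le, hε.2⟩
    have hE : e' ε ≤ e' xM := hxMmax hεIcc
    have hum : e'' xm / xm ≤ e'' ε / ε := hxmmin hεIcc
    have h1 : T (z * (e'' ε / ε)) ≤ T (z * (e'' xm / xm)) :=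
      hmono (z * (e'' xm / xm)) (z * (e'' ε / ε)) (by positivity)
        (mul_le_mul_of_nonneg_left hum hz.le)
    have h2 : T (z * (e'' xm / xm)) ≤ C₃ * (z ^ (-γ) * (e'' xm / xm) ^ (-γ)) := by
      have h3 := hglob (z * (e'' xm / xm)) (by positivity)
      rwa [Real.mul_rpow hz.le humpos.le] at h3
    have h4 : T (z * (e'' ε / ε)) ≤ C₃ * (z ^ (-γ) * (e'' xm / xm) ^ (-γ)) := le_trans h1 h2
    calc e' ε * T (z * (e'' ε / ε))
        ≤ e' xM * (C₃ * (z ^ (-γ) * (e'' xm / xm) ^ (-γ))) :=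
          mul_le_mul hE h4 (hnn _ (by positivity)) hEpos.le
      _ = e' xM * C₃ * (e'' xm / xm) ^ (-γ) * z ^ (-γ) := by ring
      _ ≤ C * z ^ (-γ) := mul_le_mul_of_nonneg_right (le_max_right _ _) (Real.rpow_nonneg hz.le _)
      _ ≤ C * max (z ^ (-β)) (z ^ (-γ)) :=
          mul_le_mul_of_nonneg_left (le_max_right _ _) hCpos.le
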